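/- Let α ∈ (0,1) and define g_α(u) = (sin(πα)/(πα)) ∫₀^∞ e^{−u (ξ cos(πα/2))^{1/α}} / (ξ² + 2ξ cos(πα) + 1) dξ for u > 0. Then lim_{u→∞} u^α · g_α(u) = (2/π) Γ(α) sin(πα/2), where Γ is the Gamma function. -/

import Mathlib

open MeasureTheory Real Filter Topology

/-- `g_α(u) = (sin(πα)/(πα)) ∫₀^∞ e^{−u (ξ cos(πα/2))^{1/α}} / (ξ² + 2ξ cos(πα) + 1) dξ`. -/
noncomputable def gStable (α : ℝ) (u : ℝ) : ℝ :=
  (Real.sin (π * α) / (π * α)) *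
    ∫ ξ in Set.Ioi (0 : ℝ),
      Real.exp (-u * (ξ * Real.cos (π * α / 2)) ^ (1 / α)) /
        (ξ ^ 2 + 2 * ξ * Real.cos (π * α) + 1)

/-- `u^α g_α(u) → (2/π) Γ(α) sin(πα/2)` as `u → ∞`. -/
theorem gStable_asymptotics (α : ℝ) (hα : α ∈ Set.Ioo (0 : ℝ) 1) :
    Tendsto (fun u : ℝ => u ^ α * gStable α u) atTop
      (𝓝 ((2 / π) * Real.Gamma α * Real.sin (π * α / 2))) := by
  obtain ⟨hα0, hα1⟩ := hα
  have hπ := Real.pi_pos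
  set c := Real.cos (π * α / 2) with hc_def
  have hc : 0 < c := Real.cos_pos_of_mem_Ioo ⟨by nlinarith, by nlinarith⟩
  have hsin : 0 < Real.sin (π * α) :=
    Real.sin_pos_of_pos_of_lt_pi (by positivity) (by nlinarith)
  have hp1 : 1 ≤ 1 / α := (le_div_iff₀ hα0).mpr (by linarith)
  have hp0 : 0 < 1 / α := by positivity
  set D : ℝ → ℝ := fun x => x ^ 2 + 2 * x * Real.cos (π * α) + 1 with hD_def
  have hDlb : ∀ x, Real.sin (π * α) ^ 2 ≤ D x := by
    intro x
    have h1 : Real.sin (π * α) ^ 2 + Real.cos (π * α) ^ 2 = 1 := Real.sin_sq_add_cos_sq _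
    simp only [hD_def]
    nlinarith [sq_nonneg (x + Real.cos (π * α))]
  have hDpos : ∀ x, 0 < D x := fun x => lt_of_lt_of_le (by positivity) (hDlb x)
  have hDcont : Continuous D := by
    simp only [hD_def]; continuity
  -- integrability of the limit integrand
  have hint : IntegrableOn (fun s : ℝ => Real.exp (-(s * c) ^ (1 / α))) (Set.Ioi 0) := by
    have h := integrableOn_rpow_mul_exp_neg_mul_rpow (p := 1 / α) (s := 0)
      (b := c ^ (1 / α)) neg_one_lt_zero hp0 (Real.rpow_pos_of_pos hc _)
    refine h.congr_fun (fun x hx => ?_) measurableSet_Ioi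
    beta_reduce; rw [Real.rpow_zero, one_mul, Real.mul_rpow (le_of_lt hx) hc.le]
    ring_nf
  -- value of the limit integral
  have hval : ∫ s in Set.Ioi (0 : ℝ), Real.exp (-(s * c) ^ (1 / α))
      = c⁻¹ * (α * Real.Gamma α) := by
    have h1 : Set.EqOn (fun s : ℝ => Real.exp (-(s * c) ^ (1 / α)))
        (fun s : ℝ => Real.exp (-(c ^ (1 / α)) * s ^ (1 / α))) (Set.Ioi 0) := by
      intro x hx
      simp only
      rw [Real.mul_rpow (le_of_lt hx) hc.le]
      ring_nf
    rw [setIntegral_congr_fun measurableSet_Ioi h1,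
      integral_exp_neg_mul_rpow hp0 (Real.rpow_pos_of_pos hc _), one_div_one_div,
      Real.Gamma_add_one hα0.ne', ← Real.rpow_mul hc.le]
    have : 1 / α * (-1 / (1 / α)) = -1 := by field_simp
    rw [this, Real.rpow_neg_one]
  -- dominated convergence
  have hF : Tendsto (fun u : ℝ => ∫ s in Set.Ioi (0 : ℝ),
      Real.exp (-(s * c) ^ (1 / α)) / D (u ^ (-α) * s)) atTop
      (𝓝 (∫ s in Set.Ioi (0 : ℝ), Real.exp (-(s * c) ^ (1 / α)))) := by
    have hexp_cont : Continuous fun s : ℝ => Real.exp (-(s * c) ^ (1 / α)) := by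
      apply Real.continuous_exp.comp
      apply Continuous.neg
      exact (continuous_id.mul continuous_const).rpow_const (fun x => Or.inr hp0.le)
    refine tendsto_integral_filter_of_dominated_convergence
      (bound := fun s => Real.exp (-(s * c) ^ (1 / α)) / Real.sin (π * α) ^ 2)
      ?_ ?_ ?_ ?_
    · filter_upwards with u
      apply Continuous.aestronglyMeasurable
      exact hexp_cont.div (hDcont.comp (continuous_const.mul continuous_id))
        (fun s => (hDpos _).ne')
    · filter_upwards with u
      filter_upwards with s
      have h1 : 0 ≤ Real.exp (-(s * c) ^ (1 / α)) / D (u ^ (-α) * s) :=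
        div_nonneg (Real.exp_nonneg _) (hDpos _).le
      rw [Real.norm_eq_abs, abs_of_nonneg h1]
      exact div_le_div_of_nonneg_left (Real.exp_nonneg _) (by positivity) (hDlb _)
    · exact hint.div_const _
    · filter_upwards with s
      have h0 : Tendsto (fun u : ℝ => u ^ (-α) * s) atTop (𝓝 0) := by
        simpa using (tendsto_rpow_neg_atTop hα0).mul_const s
      have hD0 : D 0 = 1 := by simp [hD_def]
      have h2 : Tendsto (fun u : ℝ => D (u ^ (-α) * s)) atTop (𝓝 1) := by
        simpa [hD0, Function.comp_def] using (hDcont.tendsto 0).comp h0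
      have := (tendsto_const_nhds (x := Real.exp (-(s * c) ^ (1 / α)))).div h2 one_ne_zero
      simpa [Pi.div_def] using this
  -- rescaling identity
  have hEq : (fun u : ℝ => u ^ α * gStable α u) =ᶠ[atTop] fun u =>
      (Real.sin (π * α) / (π * α)) *
        ∫ s in Set.Ioi (0 : ℝ), Real.exp (-(s * c) ^ (1 / α)) / D (u ^ (-α) * s) := by
    filter_upwards [eventually_gt_atTop (0 : ℝ)] with u hu
    unfold gStable
    rw [← hc_def]
    rw [← mul_assoc, mul_comm (u ^ α), mul_assoc]
    congr 1
    have hb : 0 < u ^ (-α) := Real.rpow_pos_of_pos hu _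
    have key := integral_comp_mul_left_Ioi
      (fun ξ => Real.exp (-u * (ξ * c) ^ (1 / α)) / D ξ) 0 hb
    have hinv : (u ^ (-α))⁻¹ = u ^ α := by rw [Real.rpow_neg hu.le, inv_inv]
    rw [mul_zero, smul_eq_mul, hinv] at key
    rw [← key]
    refine setIntegral_congr_fun measurableSet_Ioi (fun x hx => ?_)
    congr 2
    have h1 : u ^ (-α) * x * c = u ^ (-α) * (x * c) := by ring
    rw [h1, Real.mul_rpow (Real.rpow_nonneg hu.le _) (mul_nonneg (le_of_lt hx) hc.le),
      ← Real.rpow_mul hu.le]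
    have h2 : -α * (1 / α) = -1 := by field_simp
    rw [h2, Real.rpow_neg_one]
    field_simp
  -- combine
  have hlim := (hF.const_mul (Real.sin (π * α) / (π * α)))
  rw [hval] at hlim
  have hvalue : Real.sin (π * α) / (π * α) * (c⁻¹ * (α * Real.Gamma α))
      = 2 / π * Real.Gamma α * Real.sin (π * α / 2) := by
    have h2 : π * α = 2 * (π * α / 2) := by ring
    rw [h2, Real.sin_two_mul, ← hc_def]
    field_simp
  rw [hvalue] at hlim
  exact hlim.congr' hEq.symm
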